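/- arXiv:0708.3073 — 3 statements merged into one kernel-verified Lean document; each statement's English description precedes it below -/
import Mathlib

section
/- For the single-node fluid dynamics, if x(t) = 0 on an interval where the derivative exists, then the outflow derivative equals the inflow derivative: at almost every t with x(t) = 0 and y(t) = Y'(t) ≤ γ, one has Z'(t) = y(t); at almost every t with x(t) > 0, one has Z'(t) = γ. -/
open Real

/-- Virtual level `V(t) = x₀ + Y(t) − γ t` of a single fluid node. -/
noncomputable def Vfun (x₀ γ : ℝ) (Y : ℝ → ℝ) : ℝ → ℝ := fun t => x₀ + Y t - γ * t

/-- Unused service capacity `U(t) = max {0, −inf_{[0,t]} V}`. -/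
noncomputable def Ufun (x₀ γ : ℝ) (Y : ℝ → ℝ) : ℝ → ℝ := fun t =>
  max 0 (-(sInf (Vfun x₀ γ Y '' Set.Icc 0 t)))

/-- The fluid level `x(t) = W(γ,x₀,Y)(t) = V(t) + U(t)`. -/
noncomputable def Wfun (x₀ γ : ℝ) (Y : ℝ → ℝ) : ℝ → ℝ := fun t =>
  Vfun x₀ γ Y t + Ufun x₀ γ Y t

/-- Net outflow `Z(t) = x₀ + Y(t) − x(t)` of the single fluid node. -/
noncomputable def Zfun (x₀ γ : ℝ) (Y : ℝ → ℝ) : ℝ → ℝ := fun t =>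
  x₀ + Y t - Wfun x₀ γ Y t

lemma aux_max_neg (x : ℝ) : max 0 (-x) = -(min 0 x) := by
  rcases le_total x 0 with h | h
  · rw [max_eq_right (by linarith), min_eq_right h]
  · rw [max_eq_left (by linarith), min_eq_left h, neg_zero]

lemma aux_bdd {f : ℝ → ℝ} (hf : Continuous f) (a b : ℝ) :
    BddBelow (f '' Set.Icc a b) :=
  (isCompact_Icc.image hf).bddBelow

lemma aux_split {f : ℝ → ℝ} (hf : Continuous f) {a b c : ℝ} (hab : a ≤ b) (hbc : b ≤ c) :
    sInf (f '' Set.Icc a c) = min (sInf (f '' Set.Icc a b)) (sInf (f '' Set.Icc b c)) := by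
  rw [← Set.Icc_union_Icc_eq_Icc hab hbc, Set.image_union]
  exact csInf_union (aux_bdd hf a b) ⟨f a, ⟨a, by simp [hab], rfl⟩⟩
    (aux_bdd hf b c) ⟨f b, ⟨b, by simp [hbc], rfl⟩⟩

lemma aux_le {f : ℝ → ℝ} (hf : Continuous f) {a b x : ℝ} (hx : x ∈ Set.Icc a b) :
    sInf (f '' Set.Icc a b) ≤ f x :=
  csInf_le (aux_bdd hf a b) ⟨x, hx, rfl⟩

lemma aux_anti {f : ℝ → ℝ} (hf : Continuous f) {a p q : ℝ} (hap : a ≤ p) (hpq : p ≤ q) :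
    sInf (f '' Set.Icc a q) ≤ sInf (f '' Set.Icc a p) := by
  rw [aux_split hf hap hpq]; exact min_le_left _ _

/-- Single-node fluid dynamics, work-conservation at the level of derivatives:
where the derivatives exist, if `x(t) = 0` and `Y'(t) ≤ γ` then `Z'(t) = Y'(t)`,
while if `x(t) > 0` then `Z'(t) = γ`. -/
theorem stmt8 (γ x₀ : ℝ) (Y : ℝ → ℝ) (K : NNReal)
    (hγ : 0 < γ) (hx₀ : 0 ≤ x₀)
    (hmono : MonotoneOn Y (Set.Ici 0)) (hLip : LipschitzWith K Y) (hY0 : Y 0 = 0) :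
    (∀ t : ℝ, 0 < t → ∀ yv zv : ℝ,
      Wfun x₀ γ Y t = 0 → HasDerivAt Y yv t → yv ≤ γ →
      HasDerivAt (Zfun x₀ γ Y) zv t → zv = yv) ∧
    (∀ t : ℝ, 0 < t → ∀ zv : ℝ,
      0 < Wfun x₀ γ Y t →
      HasDerivAt (Zfun x₀ γ Y) zv t → zv = γ) := by
  have hVc : Continuous (Vfun x₀ γ Y) := by
    unfold Vfun
    exact (continuous_const.add hLip.continuous).sub (continuous_const.mul continuous_id)
  set V : ℝ → ℝ := Vfun x₀ γ Y with hVdef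
  set m : ℝ → ℝ := fun s => sInf (V '' Set.Icc 0 s) with hmdef
  have hU : ∀ s, Ufun x₀ γ Y s = -(min 0 (m s)) := by
    intro s; rw [← aux_max_neg]; rfl
  have hZU : ∀ s, Zfun x₀ γ Y s = γ * s - Ufun x₀ γ Y s := by
    intro s
    simp only [Zfun, Wfun, Vfun]
    ring
  constructor
  · -- case x(t) = 0
    intro t ht yv zv hW hY hyv hZ
    have hmtle : m t ≤ V t := aux_le hVc ⟨le_of_lt ht, le_refl t⟩
    have hWt : V t + max 0 (-(m t)) = 0 := hW
    have hVt0 : V t ≤ 0 ∧ V t = m t := by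
      rcases le_total (m t) 0 with h | h
      · rw [max_eq_right (by linarith)] at hWt
        constructor <;> linarith
      · rw [max_eq_left (by linarith)] at hWt
        constructor <;> linarith
    -- for s ≥ t : U s = -(inf_{[t,s]} V)
    have hUs : ∀ s, t ≤ s → Ufun x₀ γ Y s = -(sInf (V '' Set.Icc t s)) := by
      intro s hs
      have hIle : sInf (V '' Set.Icc t s) ≤ V t := aux_le hVc ⟨le_refl t, hs⟩
      have hsplit : m s = min (m t) (sInf (V '' Set.Icc t s)) := aux_split hVc ht.le hs
      have hms : m s = sInf (V '' Set.Icc t s) := by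
        rw [hsplit]; exact min_eq_right (by linarith [hVt0.2])
      rw [hU s, hms, min_eq_right (by linarith [hVt0.1, hVt0.2])]
    have hUt : Ufun x₀ γ Y t = -(V t) := by
      rw [hU t, min_eq_right (by linarith [hVt0.1, hVt0.2]), hVt0.2]
    have hZw : HasDerivWithinAt (Zfun x₀ γ Y) yv (Set.Ici t) t := by
      rw [hasDerivWithinAt_iff_isLittleO, Asymptotics.isLittleO_iff]
      intro ε hε
      have hYo := hasDerivAt_iff_isLittleO.mp hY
      rw [Asymptotics.isLittleO_iff] at hYo
      have hev := hYo hε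
      rw [Metric.eventually_nhds_iff] at hev
      obtain ⟨δ, hδ, hball⟩ := hev
      rw [eventually_nhdsWithin_iff, Metric.eventually_nhds_iff]
      refine ⟨δ, hδ, fun s hsd hs => ?_⟩
      have hts : t ≤ s := hs
      have hstδ : s - t < δ := by
        rw [Real.dist_eq] at hsd
        calc s - t ≤ |s - t| := le_abs_self _
        _ < δ := hsd
      -- the error bound on Y on [t,s]
      have hYerr : ∀ r, t ≤ r → r ≤ s → |Y r - Y t - (r - t) * yv| ≤ ε * (r - t) := by
        intro r htr hrs
        have : dist r t < δ := by
          rw [Real.dist_eq, abs_of_nonneg (by linarith)]; linarith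
        have := hball this
        rw [Real.norm_eq_abs, Real.norm_eq_abs, smul_eq_mul,
          abs_of_nonneg (by linarith : (0:ℝ) ≤ r - t)] at this
        linarith [this]
      set I := sInf (V '' Set.Icc t s) with hIdef
      have hIleVs : I ≤ V s := aux_le hVc ⟨hts, le_refl s⟩
      have hIge : V t - (γ - yv + ε) * (s - t) ≤ I := by
        refine le_csInf ⟨V t, ⟨t, ⟨le_refl t, hts⟩, rfl⟩⟩ ?_
        rintro b ⟨r, ⟨htr, hrs⟩, rfl⟩
        have h1 := hYerr r htr hrs
        have h2 : (yv - ε) * (r - t) ≤ Y r - Y t := by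
          have := abs_le.mp h1
          nlinarith
        have h3 : (γ - yv + ε) * (r - t) ≤ (γ - yv + ε) * (s - t) :=
          mul_le_mul_of_nonneg_left (by linarith) (by linarith)
        show V t - (γ - yv + ε) * (s - t) ≤ V r
        have hVr : V r - V t = Y r - Y t - γ * (r - t) := by
          simp only [hVdef, Vfun]; ring
        nlinarith
      -- the main estimate
      have hZs : Zfun x₀ γ Y s - Zfun x₀ γ Y t - (s - t) * yv
          = (γ - yv) * (s - t) - (V t - I) := by
        rw [hZU s, hZU t, hUs s hts, hUt]
        ring
      have hVs : V t - V s = γ * (s - t) - (Y s - Y t) := by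
        simp only [hVdef, Vfun]; ring
      have hYs := abs_le.mp (hYerr s hts (le_refl s))
      rw [Real.norm_eq_abs, Real.norm_eq_abs, smul_eq_mul,
        abs_of_nonneg (by linarith : (0:ℝ) ≤ s - t)]
      rw [abs_le]
      constructor
      · -- lower bound
        have : V t - I ≤ (γ - yv + ε) * (s - t) := by linarith
        nlinarith
      · -- upper bound
        have : γ * (s - t) - ((yv + ε) * (s - t)) ≤ V t - I := by nlinarith
        nlinarith
    have hu : UniqueDiffWithinAt ℝ (Set.Ici t) t := uniqueDiffOn_Ici t t Set.self_mem_Ici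
    have h1 := hZw.derivWithin hu
    have h2 := (hZ.hasDerivWithinAt (s := Set.Ici t)).derivWithin hu
    rw [← h1, ← h2]
  · -- case x(t) > 0
    intro t ht zv hW hZ
    have hWt : 0 < V t + max 0 (-(m t)) := hW
    have hWt' : min 0 (m t) < V t := by
      rw [aux_max_neg] at hWt; linarith
    -- find a neighborhood where V > min 0 (m t)
    have hopen : IsOpen (V ⁻¹' Set.Ioi (min 0 (m t))) := isOpen_Ioi.preimage hVc
    obtain ⟨ε, hε, hball⟩ := Metric.isOpen_iff.mp hopen t hWt'
    set δ : ℝ := min (ε / 2) (t / 2) with hδdef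
    have hδ : 0 < δ := lt_min (by linarith) (by linarith)
    have hδε : δ < ε := lt_of_le_of_lt (min_le_left _ _) (by linarith)
    have hδt : δ ≤ t / 2 := min_le_right _ _
    set a : ℝ := t - δ with hadef
    set b : ℝ := t + δ with hbdef
    have ha0 : 0 ≤ a := by simp only [hadef]; linarith
    have hVgt : ∀ s ∈ Set.Icc a b, min 0 (m t) < V s := by
      intro s hs
      apply hball
      rw [Metric.mem_ball, Real.dist_eq, abs_lt]
      constructor
      · simp only [hadef] at hs; linarith [hs.1]
      · simp only [hbdef] at hs; linarith [hs.2]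
    -- min 0 (m a) ≤ min 0 (m b)
    have hanti : ∀ p q : ℝ, 0 ≤ p → p ≤ q → m q ≤ m p := fun p q hp hpq =>
      aux_anti hVc hp hpq
    have hab : min 0 (m a) ≤ min 0 (m b) := by
      by_contra hcon
      push_neg at hcon
      have hmb0 : m b < 0 := by
        rcases min_cases 0 (m b) with ⟨h1, h2⟩ | ⟨h1, h2⟩
        · rw [h1] at hcon; exact absurd (min_le_left 0 (m a)) (not_le.mpr hcon)
        · rw [h1] at hcon
          calc m b < min 0 (m a) := hcon
          _ ≤ 0 := min_le_left _ _
      have hmba : m b < m a := by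
        calc m b = min 0 (m b) := (min_eq_right hmb0.le).symm
        _ < min 0 (m a) := hcon
        _ ≤ m a := min_le_right _ _
      have hsplit : m b = min (m a) (sInf (V '' Set.Icc a b)) :=
        aux_split hVc ha0 (by simp only [hadef, hbdef]; linarith)
      have hmbI : m b = sInf (V '' Set.Icc a b) := by
        rcases min_cases (m a) (sInf (V '' Set.Icc a b)) with ⟨h1, h2⟩ | ⟨h1, h2⟩
        · rw [hsplit, h1] at hmba ⊢; linarith
        · rw [hsplit, h1]
      have hne : (V '' Set.Icc a b).Nonempty :=
        ⟨V a, ⟨a, ⟨le_refl a, by simp only [hadef, hbdef]; linarith⟩, rfl⟩⟩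
      have hmem := ((isCompact_Icc.image hVc).sInf_mem hne)
      obtain ⟨r, hr, hrv⟩ := hmem
      have hgt : min 0 (m t) < sInf (V '' Set.Icc a b) := by
        rw [← hrv]; exact hVgt r hr
      have hmtb : m b ≤ m t := hanti t b (by linarith) (by simp only [hbdef]; linarith)
      have : min 0 (m b) ≤ min 0 (m t) := min_le_min (le_refl 0) hmtb
      rw [min_eq_right hmb0.le] at this
      rw [← hmbI] at hgt
      linarith
    -- U is constant on Icc a b
    have hconst : ∀ s ∈ Set.Icc a b, Ufun x₀ γ Y s = Ufun x₀ γ Y t := by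
      intro s hs
      rw [hU s, hU t]
      have hta : a ≤ t := by simp only [hadef]; linarith
      have htb : t ≤ b := by simp only [hbdef]; linarith
      have e1 : m b ≤ m s := hanti s b (by linarith [hs.1]) hs.2
      have e2 : m s ≤ m a := hanti a s ha0 hs.1
      have e3 : m b ≤ m t := hanti t b (by linarith) htb
      have e4 : m t ≤ m a := hanti a t ha0 hta
      have f1 : min 0 (m b) ≤ min 0 (m s) := min_le_min (le_refl 0) e1
      have f2 : min 0 (m s) ≤ min 0 (m a) := min_le_min (le_refl 0) e2
      have f3 : min 0 (m b) ≤ min 0 (m t) := min_le_min (le_refl 0) e3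
      have f4 : min 0 (m t) ≤ min 0 (m a) := min_le_min (le_refl 0) e4
      have : min 0 (m s) = min 0 (m t) := le_antisymm (by linarith) (by linarith)
      rw [this]
    have hmem : Set.Icc a b ∈ nhds t :=
      Icc_mem_nhds (by simp only [hadef]; linarith) (by simp only [hbdef]; linarith)
    have heq : Zfun x₀ γ Y =ᶠ[nhds t] fun s => γ * s - Ufun x₀ γ Y t := by
      filter_upwards [hmem] with s hs
      rw [hZU s, hconst s hs]
    have hZ' : HasDerivAt (fun s => γ * s - Ufun x₀ γ Y t) zv t :=
      hZ.congr_of_eventuallyEq heq.symm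
    have hg : HasDerivAt (fun s => γ * s - Ufun x₀ γ Y t) γ t := by
      simpa using ((hasDerivAt_id t).const_mul γ).sub_const (Ufun x₀ γ Y t)
    exact hZ'.unique hg
end

section
/- For the open fluid RS-type node with two fluid classes served at rates γ₁, γ₂ (high-priority class 1), the map from (initial levels q(0), cumulative inflows Λ(·)) to the level trajectory q(·) is Lipschitz in sup norm: sup_{t∈[0,T]} ‖q(t) − q'(t)‖ ≤ L(‖q(0) − q'(0)‖ + sup_{t∈[0,T]} ‖Λ(t) − Λ'(t)‖) for a constant L = L(γ₁, γ₂) independent of T. -/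
open Real

/-- Unused service capacity of a node with initial level `q0`, cumulative
inflow `Λ` and cumulative service capacity `S`. -/
noncomputable def fU (q0 : ℝ) (Λ S : ℝ → ℝ) : ℝ → ℝ := fun t =>
  max 0 (-(sInf ((fun s => q0 + Λ s - S s) '' Set.Icc 0 t)))

/-- Fluid level of a node with initial level `q0`, cumulative inflow `Λ` and
cumulative service capacity `S`. -/
noncomputable def fQ (q0 : ℝ) (Λ S : ℝ → ℝ) : ℝ → ℝ := fun t =>
  (q0 + Λ t - S t) + fU q0 Λ S t

lemma sInf_image_diff_le {t D : ℝ} (ht : 0 ≤ t) {V V' : ℝ → ℝ}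
    (hb : BddBelow (V '' Set.Icc 0 t)) (hb' : BddBelow (V' '' Set.Icc 0 t))
    (h : ∀ s ∈ Set.Icc (0:ℝ) t, |V s - V' s| ≤ D) :
    |sInf (V '' Set.Icc 0 t) - sInf (V' '' Set.Icc 0 t)| ≤ D := by
  have hne : (Set.Icc (0:ℝ) t).Nonempty := Set.nonempty_Icc.mpr ht
  rw [abs_sub_le_iff]
  constructor
  · have key : sInf (V '' Set.Icc 0 t) - D ≤ sInf (V' '' Set.Icc 0 t) := by
      apply le_csInf (hne.image _)
      rintro b ⟨s, hs, rfl⟩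
      have h1 := csInf_le hb ⟨s, hs, rfl⟩
      have h2 := (abs_le.mp (h s hs)).2
      linarith
    linarith
  · have key : sInf (V' '' Set.Icc 0 t) - D ≤ sInf (V '' Set.Icc 0 t) := by
      apply le_csInf (hne.image _)
      rintro b ⟨s, hs, rfl⟩
      have h1 := csInf_le hb' ⟨s, hs, rfl⟩
      have h2 := (abs_le.mp (h s hs)).1
      linarith
    linarith

lemma fU_diff_le {q q' t D : ℝ} (ht : 0 ≤ t) {Λ Λ' S S' : ℝ → ℝ}
    (hb : BddBelow ((fun s => q + Λ s - S s) '' Set.Icc 0 t))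
    (hb' : BddBelow ((fun s => q' + Λ' s - S' s) '' Set.Icc 0 t))
    (h : ∀ s ∈ Set.Icc (0:ℝ) t, |(q + Λ s - S s) - (q' + Λ' s - S' s)| ≤ D) :
    |fU q Λ S t - fU q' Λ' S' t| ≤ D := by
  have hinf := sInf_image_diff_le ht hb hb' h
  simp only [fU]
  set a := sInf ((fun s => q + Λ s - S s) '' Set.Icc 0 t)
  set b := sInf ((fun s => q' + Λ' s - S' s) '' Set.Icc 0 t)
  have h1 : |max 0 (-a) - max 0 (-b)| ≤ |(-a) - (-b)| := by
    rw [max_comm 0 (-a), max_comm 0 (-b)]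
    exact abs_max_sub_max_le_abs _ _ _
  have h2 : |(-a) - (-b)| = |a - b| := by
    rw [neg_sub_neg, abs_sub_comm]
  linarith [h2.le, h2.ge]

/-- Lipschitz continuity of the two-class priority fluid node (Lemma L2):
there is `L = L(γ₁,γ₂)` such that, uniformly in the horizon `T`, the ℓ¹
distance of the level trajectories is bounded by `L` times the sum of the ℓ¹
distance of the initial levels and the sup-norm distance of the cumulative
inflows. Class 1 has priority; class 2 uses the leftover capacity `γ₂ U₁`. -/
theorem stmt18 (γ₁ γ₂ : ℝ) (h1 : 0 < γ₁) (h2 : 0 < γ₂) :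
    ∃ L : ℝ, 0 < L ∧
      ∀ T : ℝ, 0 < T →
      ∀ (q10 q20 q10' q20' : ℝ) (Λ1 Λ2 Λ1' Λ2' : ℝ → ℝ) (K : NNReal),
        0 ≤ q10 → 0 ≤ q20 → 0 ≤ q10' → 0 ≤ q20' →
        MonotoneOn Λ1 (Set.Icc 0 T) → MonotoneOn Λ2 (Set.Icc 0 T) →
        MonotoneOn Λ1' (Set.Icc 0 T) → MonotoneOn Λ2' (Set.Icc 0 T) →
        LipschitzWith K Λ1 → LipschitzWith K Λ2 →
        LipschitzWith K Λ1' → LipschitzWith K Λ2' →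
        Λ1 0 = 0 → Λ2 0 = 0 → Λ1' 0 = 0 → Λ2' 0 = 0 →
        ∀ t ∈ Set.Icc (0:ℝ) T,
          |fQ q10 Λ1 (fun s => γ₁ * s) t - fQ q10' Λ1' (fun s => γ₁ * s) t| +
          |fQ q20 Λ2 (fun s => γ₂ * fU q10 Λ1 (fun u => γ₁ * u) s) t -
            fQ q20' Λ2' (fun s => γ₂ * fU q10' Λ1' (fun u => γ₁ * u) s) t|
          ≤ L * ((|q10 - q10'| + |q20 - q20'|) +
              sSup ((fun s => |Λ1 s - Λ1' s| + |Λ2 s - Λ2' s|) ''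
                Set.Icc (0:ℝ) T)) := by
  refine ⟨4 + 2 * γ₂, by linarith, ?_⟩
  intro T hT q10 q20 q10' q20' Λ1 Λ2 Λ1' Λ2' K hq10 hq20 hq10' hq20'
    hm1 hm2 hm1' hm2' hL1 hL2 hL1' hL2' h10 h20 h10' h20' t ht
  obtain ⟨ht0, htT⟩ := ht
  set A := |q10 - q10'| + |q20 - q20'| with hA
  set D := sSup ((fun s => |Λ1 s - Λ1' s| + |Λ2 s - Λ2' s|) '' Set.Icc (0:ℝ) T) with hD
  -- size bound for the inflows
  have hKb : ∀ (Λ : ℝ → ℝ), LipschitzWith K Λ → Λ 0 = 0 →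
      ∀ s ∈ Set.Icc (0:ℝ) T, |Λ s| ≤ (K : ℝ) * T := by
    intro Λ hL h0 s hs
    have hd := hL.dist_le_mul s 0
    rw [h0, Real.dist_eq, Real.dist_eq, sub_zero, sub_zero] at hd
    calc |Λ s| ≤ (K : ℝ) * |s| := hd
      _ ≤ (K : ℝ) * T := by
        apply mul_le_mul_of_nonneg_left _ K.coe_nonneg
        rw [abs_of_nonneg hs.1]; exact hs.2
  have hDba : BddAbove ((fun s => |Λ1 s - Λ1' s| + |Λ2 s - Λ2' s|) '' Set.Icc (0:ℝ) T) := by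
    refine ⟨4 * (K : ℝ) * T, ?_⟩
    rintro b ⟨s, hs, rfl⟩
    have b1 := hKb Λ1 hL1 h10 s hs
    have b2 := hKb Λ2 hL2 h20 s hs
    have b3 := hKb Λ1' hL1' h10' s hs
    have b4 := hKb Λ2' hL2' h20' s hs
    have c1 : |Λ1 s - Λ1' s| ≤ |Λ1 s| + |Λ1' s| := abs_sub _ _
    have c2 : |Λ2 s - Λ2' s| ≤ |Λ2 s| + |Λ2' s| := abs_sub _ _
    simp only []
    linarith
  have hsub : Set.Icc (0:ℝ) t ⊆ Set.Icc (0:ℝ) T := Set.Icc_subset_Icc le_rfl htT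
  have hDle1 : ∀ s ∈ Set.Icc (0:ℝ) t, |Λ1 s - Λ1' s| ≤ D := by
    intro s hs
    have := le_csSup hDba ⟨s, hsub hs, rfl⟩
    have := abs_nonneg (Λ2 s - Λ2' s)
    simp only [] at *
    linarith
  have hDle2 : ∀ s ∈ Set.Icc (0:ℝ) t, |Λ2 s - Λ2' s| ≤ D := by
    intro s hs
    have := le_csSup hDba ⟨s, hsub hs, rfl⟩
    have := abs_nonneg (Λ1 s - Λ1' s)
    simp only [] at *
    linarith
  -- lower bound for class-1 netput
  have hlow1 : ∀ (q : ℝ) (Λ : ℝ → ℝ), MonotoneOn Λ (Set.Icc 0 T) → Λ 0 = 0 →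
      ∀ s ∈ Set.Icc (0:ℝ) t, q - γ₁ * t ≤ q + Λ s - γ₁ * s := by
    intro q Λ hm h0 s hs
    have hsT : s ∈ Set.Icc (0:ℝ) T := hsub hs
    have hΛ : 0 ≤ Λ s := by
      have := hm ⟨le_refl 0, hT.le⟩ hsT hs.1
      rw [h0] at this; exact this
    have : γ₁ * s ≤ γ₁ * t := mul_le_mul_of_nonneg_left hs.2 h1.le
    linarith
  have hbb1 : ∀ (q : ℝ) (Λ : ℝ → ℝ), MonotoneOn Λ (Set.Icc 0 T) → Λ 0 = 0 →
      ∀ s ∈ Set.Icc (0:ℝ) t,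
      BddBelow ((fun r => q + Λ r - γ₁ * r) '' Set.Icc 0 s) := by
    intro q Λ hm h0 s hs
    refine ⟨q - γ₁ * t, ?_⟩
    rintro b ⟨r, hr, rfl⟩
    exact hlow1 q Λ hm h0 r ⟨hr.1, hr.2.trans hs.2⟩
  -- class-1 difference of unused capacities, uniformly on [0,t]
  have hU1diff : ∀ s ∈ Set.Icc (0:ℝ) t,
      |fU q10 Λ1 (fun u => γ₁ * u) s - fU q10' Λ1' (fun u => γ₁ * u) s| ≤ A + D := by
    intro s hs
    apply fU_diff_le hs.1 (hbb1 q10 Λ1 hm1 h10 s hs) (hbb1 q10' Λ1' hm1' h10' s hs)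
    intro r hr
    have hrt : r ∈ Set.Icc (0:ℝ) t := ⟨hr.1, hr.2.trans hs.2⟩
    have e1 : (q10 + Λ1 r - γ₁ * r) - (q10' + Λ1' r - γ₁ * r)
        = (q10 - q10') + (Λ1 r - Λ1' r) := by ring
    rw [e1]
    calc |(q10 - q10') + (Λ1 r - Λ1' r)| ≤ |q10 - q10'| + |Λ1 r - Λ1' r| := abs_add_le _ _
      _ ≤ A + D := by
        have := hDle1 r hrt
        have := abs_nonneg (q20 - q20')
        rw [hA]; linarith
  -- upper bound for class-1 unused capacity
  have hUub : ∀ (q : ℝ) (Λ : ℝ → ℝ), 0 ≤ q → MonotoneOn Λ (Set.Icc 0 T) → Λ 0 = 0 →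
      ∀ s ∈ Set.Icc (0:ℝ) t, fU q Λ (fun u => γ₁ * u) s ≤ γ₁ * t := by
    intro q Λ hq hm h0 s hs
    have hγt : 0 ≤ γ₁ * t := mul_nonneg h1.le ht0
    apply max_le hγt
    rw [neg_le]
    apply le_csInf ((Set.nonempty_Icc.mpr hs.1).image _)
    rintro b ⟨r, hr, rfl⟩
    have := hlow1 q Λ hm h0 r ⟨hr.1, hr.2.trans hs.2⟩
    simp only []
    linarith
  -- nonnegativity of unused capacity
  have hUnn : ∀ (q : ℝ) (Λ S : ℝ → ℝ) (s : ℝ), 0 ≤ fU q Λ S s := by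
    intro q Λ S s; exact le_max_left _ _
  -- lower bound and bddBelow for class-2 netput
  have hbb2 : ∀ (q q1 : ℝ) (Λ Λ1c : ℝ → ℝ), 0 ≤ q1 → MonotoneOn Λ (Set.Icc 0 T) → Λ 0 = 0 →
      MonotoneOn Λ1c (Set.Icc 0 T) → Λ1c 0 = 0 → 0 ≤ q →
      BddBelow ((fun r => q + Λ r - γ₂ * fU q1 Λ1c (fun u => γ₁ * u) r) '' Set.Icc 0 t) := by
    intro q q1 Λ Λ1c hq1 hm h0 hm1c h01c hq
    refine ⟨q - γ₂ * (γ₁ * t), ?_⟩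
    rintro b ⟨r, hr, rfl⟩
    have hΛ : 0 ≤ Λ r := by
      have := hm ⟨le_refl 0, hT.le⟩ (hsub hr) hr.1
      rw [h0] at this; exact this
    have hub := hUub q1 Λ1c hq1 hm1c h01c r hr
    have : γ₂ * fU q1 Λ1c (fun u => γ₁ * u) r ≤ γ₂ * (γ₁ * t) :=
      mul_le_mul_of_nonneg_left hub h2.le
    simp only []
    linarith
  -- class-2 netput pointwise difference
  have hV2diff : ∀ s ∈ Set.Icc (0:ℝ) t,
      |(q20 + Λ2 s - γ₂ * fU q10 Λ1 (fun u => γ₁ * u) s) -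
       (q20' + Λ2' s - γ₂ * fU q10' Λ1' (fun u => γ₁ * u) s)| ≤ (1 + γ₂) * (A + D) := by
    intro s hs
    have e1 : (q20 + Λ2 s - γ₂ * fU q10 Λ1 (fun u => γ₁ * u) s) -
        (q20' + Λ2' s - γ₂ * fU q10' Λ1' (fun u => γ₁ * u) s)
        = (q20 - q20') + (Λ2 s - Λ2' s) -
          γ₂ * (fU q10 Λ1 (fun u => γ₁ * u) s - fU q10' Λ1' (fun u => γ₁ * u) s) := by ring
    rw [e1]
    have t1 : |(q20 - q20') + (Λ2 s - Λ2' s) -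
        γ₂ * (fU q10 Λ1 (fun u => γ₁ * u) s - fU q10' Λ1' (fun u => γ₁ * u) s)|
        ≤ |q20 - q20'| + |Λ2 s - Λ2' s| +
          γ₂ * |fU q10 Λ1 (fun u => γ₁ * u) s - fU q10' Λ1' (fun u => γ₁ * u) s| := by
      calc _ ≤ |(q20 - q20') + (Λ2 s - Λ2' s)| +
          |γ₂ * (fU q10 Λ1 (fun u => γ₁ * u) s - fU q10' Λ1' (fun u => γ₁ * u) s)| :=
            abs_sub _ _
        _ ≤ _ := by
          rw [abs_mul, abs_of_pos h2]
          have := abs_add_le (q20 - q20') (Λ2 s - Λ2' s)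
          linarith
    have t2 := hDle2 s hs
    have t3 := hU1diff s hs
    have t4 : γ₂ * |fU q10 Λ1 (fun u => γ₁ * u) s - fU q10' Λ1' (fun u => γ₁ * u) s|
        ≤ γ₂ * (A + D) := mul_le_mul_of_nonneg_left t3 h2.le
    have t5 : |q20 - q20'| ≤ A := by
      have := abs_nonneg (q10 - q10'); rw [hA]; linarith
    nlinarith
  -- class-2 unused capacity difference at t
  have htt : t ∈ Set.Icc (0:ℝ) t := ⟨ht0, le_refl t⟩
  have hU2diff : |fU q20 Λ2 (fun s => γ₂ * fU q10 Λ1 (fun u => γ₁ * u) s) t -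
      fU q20' Λ2' (fun s => γ₂ * fU q10' Λ1' (fun u => γ₁ * u) s) t| ≤ (1 + γ₂) * (A + D) := by
    apply fU_diff_le ht0 (hbb2 q20 q10 Λ2 Λ1 hq10 hm2 h20 hm1 h10 hq20)
      (hbb2 q20' q10' Λ2' Λ1' hq10' hm2' h20' hm1' h10' hq20')
    exact hV2diff
  -- class-1 level difference at t
  have hQ1 : |fQ q10 Λ1 (fun s => γ₁ * s) t - fQ q10' Λ1' (fun s => γ₁ * s) t|
      ≤ 2 * (A + D) := by
    simp only [fQ]
    have e1 : (q10 + Λ1 t - γ₁ * t) + fU q10 Λ1 (fun s => γ₁ * s) t -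
        ((q10' + Λ1' t - γ₁ * t) + fU q10' Λ1' (fun s => γ₁ * s) t)
        = ((q10 - q10') + (Λ1 t - Λ1' t)) +
          (fU q10 Λ1 (fun s => γ₁ * s) t - fU q10' Λ1' (fun s => γ₁ * s) t) := by ring
    rw [e1]
    have t1 := abs_add_le ((q10 - q10') + (Λ1 t - Λ1' t))
      (fU q10 Λ1 (fun s => γ₁ * s) t - fU q10' Λ1' (fun s => γ₁ * s) t)
    have t2 := abs_add_le (q10 - q10') (Λ1 t - Λ1' t)
    have t3 := hDle1 t htt
    have t4 := hU1diff t htt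
    have t5 : |q10 - q10'| ≤ A := by
      have := abs_nonneg (q20 - q20'); rw [hA]; linarith
    linarith
  -- class-2 level difference at t
  have hQ2 : |fQ q20 Λ2 (fun s => γ₂ * fU q10 Λ1 (fun u => γ₁ * u) s) t -
      fQ q20' Λ2' (fun s => γ₂ * fU q10' Λ1' (fun u => γ₁ * u) s) t|
      ≤ 2 * ((1 + γ₂) * (A + D)) := by
    simp only [fQ]
    have e1 : (q20 + Λ2 t - γ₂ * fU q10 Λ1 (fun u => γ₁ * u) t) +
        fU q20 Λ2 (fun s => γ₂ * fU q10 Λ1 (fun u => γ₁ * u) s) t -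
        ((q20' + Λ2' t - γ₂ * fU q10' Λ1' (fun u => γ₁ * u) t) +
        fU q20' Λ2' (fun s => γ₂ * fU q10' Λ1' (fun u => γ₁ * u) s) t)
        = ((q20 + Λ2 t - γ₂ * fU q10 Λ1 (fun u => γ₁ * u) t) -
          (q20' + Λ2' t - γ₂ * fU q10' Λ1' (fun u => γ₁ * u) t)) +
          (fU q20 Λ2 (fun s => γ₂ * fU q10 Λ1 (fun u => γ₁ * u) s) t -
          fU q20' Λ2' (fun s => γ₂ * fU q10' Λ1' (fun u => γ₁ * u) s) t) := by ring
    rw [e1]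
    have t1 := abs_add_le ((q20 + Λ2 t - γ₂ * fU q10 Λ1 (fun u => γ₁ * u) t) -
          (q20' + Λ2' t - γ₂ * fU q10' Λ1' (fun u => γ₁ * u) t))
          (fU q20 Λ2 (fun s => γ₂ * fU q10 Λ1 (fun u => γ₁ * u) s) t -
          fU q20' Λ2' (fun s => γ₂ * fU q10' Λ1' (fun u => γ₁ * u) s) t)
    have t2 := hV2diff t htt
    linarith [hU2diff]
  nlinarith [hQ1, hQ2]
end

section
/- Work-conservation implies stability of the empty state: consider a multi-class work-conserving fluid node with service rates γᵢ > 0, inflow rate functions yᵢ(t) ≥ 0, and levels x̄(t) evolving so that when ‖x̄(t)‖ > 0 the outflow rates zᵢ(t) satisfy Σᵢ zᵢ(t)/γᵢ = 1, and when x̄(t) = 0 then zᵢ(t) = yᵢ(t). If x̄(0) = 0 and the workload rate v(t) = Σᵢ yᵢ(t)/γᵢ satisfies v(t) ≤ 1 for almost all t ≥ 0, then x̄(t) = 0 for all t ≥ 0. -/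
open Real MeasureTheory

/-- Work-conservation implies stability of the empty state (Proposition PP1):
if the node starts empty and the workload rate `v(t) = Σᵢ yᵢ(t)/γᵢ` is at most
`1` almost everywhere, then the node stays empty forever. -/
theorem stmt19 (n : ℕ) (γ : Fin n → ℝ) (hγ : ∀ i, 0 < γ i)
    (x Y Z y z : ℝ → Fin n → ℝ)
    (hx0 : ∀ i, x 0 i = 0)
    (hxnn : ∀ t : ℝ, 0 ≤ t → ∀ i, 0 ≤ x t i)
    (hbal : ∀ t : ℝ, 0 ≤ t → ∀ i, x t i = x 0 i + Y t i - Z t i)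
    (hyint : ∀ i, ∀ t : ℝ, 0 ≤ t → IntervalIntegrable (fun s => y s i) volume 0 t)
    (hzint : ∀ i, ∀ t : ℝ, 0 ≤ t → IntervalIntegrable (fun s => z s i) volume 0 t)
    (hY : ∀ i, ∀ t : ℝ, 0 ≤ t → Y t i = ∫ s in (0:ℝ)..t, y s i)
    (hZ : ∀ i, ∀ t : ℝ, 0 ≤ t → Z t i = ∫ s in (0:ℝ)..t, z s i)
    (hynn : ∀ᵐ t ∂(volume.restrict (Set.Ici (0:ℝ))), ∀ i, 0 ≤ y t i)
    (hznn : ∀ᵐ t ∂(volume.restrict (Set.Ici (0:ℝ))), ∀ i, 0 ≤ z t i)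
    (hwc : ∀ᵐ t ∂(volume.restrict (Set.Ici (0:ℝ))),
      ((0 < ∑ i, x t i) → (∑ i, z t i / γ i) = 1) ∧
      ((∑ i, x t i) = 0 → ∀ i, z t i = y t i))
    (hload : ∀ᵐ t ∂(volume.restrict (Set.Ici (0:ℝ))), (∑ i, y t i / γ i) ≤ 1) :
    ∀ t : ℝ, 0 ≤ t → ∀ i, x t i = 0 := by
  intro t ht
  -- integrability of the weighted difference
  have hint : ∀ i : Fin n, IntervalIntegrable (fun s => (y s i - z s i) / γ i) volume 0 t := by
    intro i
    simpa [div_eq_mul_inv] using ((hyint i t ht).sub (hzint i t ht)).mul_const (γ i)⁻¹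
  -- a.e. nonpositivity of the workload drift on Icc 0 t
  have key : ∀ᵐ s ∂(volume.restrict (Set.Icc (0:ℝ) t)),
      0 ≤ -∑ i, (y s i - z s i) / γ i := by
    have hsub : Set.Icc (0:ℝ) t ⊆ Set.Ici 0 := fun s hs => hs.1
    have h1 := (hwc.and hload).filter_mono (ae_mono (Measure.restrict_mono hsub le_rfl))
    have h2 := ae_restrict_mem (μ := volume) (measurableSet_Icc (a := (0:ℝ)) (b := t))
    filter_upwards [h1, h2] with s hs hmem
    obtain ⟨⟨hwc1, hwc2⟩, hl⟩ := hs
    have hsplit : ∑ i, (y s i - z s i) / γ i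
        = (∑ i, y s i / γ i) - (∑ i, z s i / γ i) := by
      rw [← Finset.sum_sub_distrib]
      exact Finset.sum_congr rfl fun i _ => by ring
    have hxs : 0 ≤ ∑ i, x s i :=
      Finset.sum_nonneg fun i _ => hxnn s hmem.1 i
    rcases hxs.lt_or_eq with hpos | heq
    · have hz1 := hwc1 hpos
      simp only [hsplit, hz1]
      linarith
    · have hz := hwc2 heq.symm
      have : ∑ i, (y s i - z s i) / γ i = 0 := by
        apply Finset.sum_eq_zero
        intro i _
        rw [hz i]; ring
      simp [this]
  -- the workload at time t is nonpositive
  have hWle : ∑ i, x t i / γ i ≤ 0 := by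
    have hrepr : ∑ i, x t i / γ i = ∫ s in (0:ℝ)..t, ∑ i, (y s i - z s i) / γ i := by
      rw [intervalIntegral.integral_finset_sum (fun i _ => hint i)]
      apply Finset.sum_congr rfl
      intro i _
      have := intervalIntegral.integral_div (f := fun s => y s i - z s i) (r := γ i)
        (μ := volume) (a := (0:ℝ)) (b := t)
      rw [this, intervalIntegral.integral_sub (hyint i t ht) (hzint i t ht),
        ← hY i t ht, ← hZ i t ht, hbal t ht i, hx0 i]
      ring
    have h0 : 0 ≤ ∫ s in (0:ℝ)..t, -∑ i, (y s i - z s i) / γ i :=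
      intervalIntegral.integral_nonneg_of_ae_restrict ht key
    rw [intervalIntegral.integral_neg] at h0
    linarith [hrepr ▸ (neg_nonneg.mp h0)]
  -- conclude each coordinate is zero
  have hWnn : 0 ≤ ∑ i, x t i / γ i :=
    Finset.sum_nonneg fun i _ => div_nonneg (hxnn t ht i) (hγ i).le
  have hW0 : ∑ i, x t i / γ i = 0 := le_antisymm hWle hWnn
  intro i
  have := (Finset.sum_eq_zero_iff_of_nonneg
    (fun j _ => div_nonneg (hxnn t ht j) (hγ j).le)).mp hW0 i (Finset.mem_univ i)
  have hγi := (hγ i).ne'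
  field_simp at this
  simpa using this
end
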